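/- Let δ > 0 and let (s_k)_{k∈ℕ} be a sequence of nonnegative reals with s_{k+1} ≥ (1+δ) s_k for all k and s_0 > 0. Then for every t > 0, ∑_{k : t s_k ≤ 1} t s_k + ∑_{k : t s_k > 1} exp(−t δ s_k) ≤ 1 + δ^{-1} + 1/(1 − exp(−δ²)). -/

import Mathlib

open Real Finset

theorem lacunary_exp_sum_bound (δ : ℝ) (hδ : 0 < δ) (s : ℕ → ℝ)
    (hs0 : 0 < s 0) (hgrow : ∀ k, (1 + δ) * s k ≤ s (k + 1)) :
    ∀ t : ℝ, 0 < t →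
      (∑' k : ℕ, if t * s k ≤ 1 then t * s k else 0) +
        (∑' k : ℕ, if 1 < t * s k then Real.exp (-(t * δ * s k)) else 0) ≤
      1 + δ⁻¹ + 1 / (1 - Real.exp (-δ ^ 2)) := by
  intro t ht
  have h1δ : (1:ℝ) < 1 + δ := by linarith
  have hpos : ∀ k, 0 < s k := by
    intro k; induction k with
    | zero => exact hs0
    | succ n ih => exact lt_of_lt_of_le (by nlinarith) (hgrow n)
  have hpow : ∀ k j, (1 + δ) ^ j * s k ≤ s (k + j) := by
    intro k j; induction j with
    | zero => simp
    | succ n ih =>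
      have hp : (0:ℝ) < (1+δ)^n := pow_pos (by linarith) n
      calc (1+δ)^(n+1) * s k = (1+δ) * ((1+δ)^n * s k) := by ring
      _ ≤ (1+δ) * s (k+n) := by nlinarith [hpos k]
      _ ≤ s (k + (n+1)) := by rw [← add_assoc]; exact hgrow (k+n)
  have hex : ∃ k, 1 < t * s k := by
    obtain ⟨n, hn⟩ := pow_unbounded_of_one_lt ((t * s 0)⁻¹) h1δ
    refine ⟨n, ?_⟩
    have h0 : 0 < t * s 0 := mul_pos ht hs0
    have h2 : (t * s 0)⁻¹ * (t * s 0) < (1+δ)^n * (t * s 0) :=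
      mul_lt_mul_of_pos_right hn h0
    rw [inv_mul_cancel₀ (ne_of_gt h0)] at h2
    have h3 := hpow 0 n
    simp only [zero_add] at h3
    nlinarith
  set m := Nat.find hex with hm_def
  have hm1 : 1 < t * s m := Nat.find_spec hex
  have hlt : ∀ k < m, t * s k ≤ 1 := fun k hk => le_of_not_gt (Nat.find_min hex hk)
  have hge : ∀ k, m ≤ k → 1 < t * s k := by
    intro k hk
    have h3 := hpow m (k - m)
    rw [Nat.add_sub_cancel' hk] at h3
    have hp : (1:ℝ) ≤ (1+δ)^(k-m) := one_le_pow₀ (by linarith)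
    nlinarith [hpos m]
  -- first sum
  set q : ℝ := (1+δ)⁻¹ with hq_def
  have hq0 : 0 < q := inv_pos.mpr (by linarith)
  have hq1 : q < 1 := by
    rw [hq_def, inv_lt_one_iff₀]; right; exact h1δ
  have hsum1 : (∑' k : ℕ, if t * s k ≤ 1 then t * s k else 0)
      = ∑ k ∈ range m, t * s k := by
    rw [tsum_eq_sum (s := range m)]
    · exact sum_congr rfl fun k hk => if_pos (hlt k (mem_range.mp hk))
    · intro k hk
      exact if_neg (not_le.mpr (hge k (le_of_not_gt fun h => hk (mem_range.mpr h))))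
  have hterm1 : ∀ k ∈ range m, t * s k ≤ q ^ (m - 1 - k) := by
    intro k hk
    have hkm : k ≤ m - 1 := Nat.le_sub_one_of_lt (mem_range.mp hk)
    have h3 := hpow k (m - 1 - k)
    rw [Nat.add_sub_cancel' hkm] at h3
    have hm1lt : m - 1 < m := by have := mem_range.mp hk; omega
    have h4 : t * s (m-1) ≤ 1 := hlt _ hm1lt
    have hp : (0:ℝ) < (1+δ)^(m-1-k) := pow_pos (by linarith) _
    rw [hq_def, inv_pow, ← mul_one (((1+δ)^(m-1-k))⁻¹), le_inv_mul_iff₀ hp]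
    nlinarith [hpos k, mul_le_mul_of_nonneg_left h3 ht.le]
  have hbound1 : (∑ k ∈ range m, t * s k) ≤ (1 - q)⁻¹ := by
    calc (∑ k ∈ range m, t * s k) ≤ ∑ k ∈ range m, q ^ (m - 1 - k) :=
          sum_le_sum hterm1
      _ = ∑ j ∈ range m, q ^ j := Finset.sum_range_reflect (fun j => q ^ j) m
      _ ≤ ∑' j : ℕ, q ^ j := Summable.sum_le_tsum _ (fun i _ => pow_nonneg hq0.le i)
          (summable_geometric_of_lt_one hq0.le hq1)
      _ = (1 - q)⁻¹ := tsum_geometric_of_lt_one hq0.le hq1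
  have hq_val : (1 - q)⁻¹ = 1 + δ⁻¹ := by
    have h1 : (1:ℝ) + δ ≠ 0 := by linarith
    have h2 : δ ≠ 0 := ne_of_gt hδ
    rw [hq_def]
    rw [show (1:ℝ) - (1+δ)⁻¹ = δ / (1+δ) by field_simp; ring]
    rw [show (1:ℝ) + δ⁻¹ = (1+δ)/δ by field_simp; ring]
    rw [inv_div]
  -- second sum
  set r : ℝ := Real.exp (-δ^2) with hr_def
  have hr0 : 0 < r := Real.exp_pos _
  have hr1 : r < 1 := by
    rw [hr_def, Real.exp_lt_one_iff]; nlinarith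
  set g : ℕ → ℝ := fun k => if m ≤ k then r ^ (k - m) else 0 with hg_def
  have hfg : ∀ k, (if 1 < t * s k then Real.exp (-(t * δ * s k)) else 0) ≤ g k := by
    intro k
    rcases lt_or_ge k m with hk | hk
    · rw [if_neg (not_lt.mpr (hlt k hk)), hg_def]
      simp [Nat.not_le.mpr hk]
    · rw [if_pos (hge k hk), hg_def]
      simp only [hk, if_true]
      rw [hr_def, ← Real.exp_nat_mul, Real.exp_le_exp]
      have h3 := hpow m (k - m)
      rw [Nat.add_sub_cancel' hk] at h3
      have hbern : 1 + (k - m : ℕ) * δ ≤ (1+δ)^(k-m) := by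
        have := one_add_mul_le_pow (a := δ) (by linarith) (k - m)
        simpa using this
      have hp : (0:ℝ) < (1+δ)^(k-m) := pow_pos (by linarith) _
      have h6 := mul_le_mul_of_nonneg_left h3 ht.le
      have hts : 1 + (k - m : ℕ) * δ ≤ t * s k := by nlinarith [hpos m]
      nlinarith [Nat.cast_nonneg (α := ℝ) (k - m)]
  have hfnn : ∀ k, 0 ≤ (if 1 < t * s k then Real.exp (-(t * δ * s k)) else 0) := by
    intro k; split
    · exact (Real.exp_pos _).le
    · exact le_rfl
  have hinj : Function.Injective (fun j : ℕ => m + j) := add_right_injective m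
  have hzero : ∀ x ∉ Set.range (fun j : ℕ => m + j), g x = 0 := by
    intro x hx
    have : x < m := by
      by_contra h
      exact hx ⟨x - m, by show m + (x - m) = x; omega⟩
    simp [hg_def, Nat.not_le.mpr this]
  have hgcomp : (g ∘ fun j : ℕ => m + j) = fun j => r ^ j := by
    funext j; simp [hg_def]
  have hgsummable : Summable g := by
    rw [← hinj.summable_iff hzero, hgcomp]
    exact summable_geometric_of_lt_one hr0.le hr1
  have hsupp : Function.support g ⊆ Set.range (fun j : ℕ => m + j) := by
    intro x hx
    by_contra h
    exact hx (hzero x h)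
  have hgsum : ∑' k, g k = (1 - r)⁻¹ := by
    rw [← hinj.tsum_eq hsupp]
    have : (fun j => g (m + j)) = fun j => r ^ j := by
      funext j; simp [hg_def]
    simp only [this]
    exact tsum_geometric_of_lt_one hr0.le hr1
  have hfsummable : Summable (fun k => if 1 < t * s k then Real.exp (-(t * δ * s k)) else 0) :=
    Summable.of_nonneg_of_le hfnn hfg hgsummable
  have hbound2 : (∑' k : ℕ, if 1 < t * s k then Real.exp (-(t * δ * s k)) else 0)
      ≤ (1 - r)⁻¹ := by
    rw [← hgsum]
    exact Summable.tsum_le_tsum hfg hfsummable hgsummable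
  rw [hsum1, one_div]
  have := hbound1
  rw [hq_val] at this
  linarith
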